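/- Let G be a snake graph with d tiles and let Ω be as in the context. Then for every perfect matching P of G and every sequence of tile indices i_1, …, i_r (r ≥ 0) such that, setting Q_0 = P and Q_t = μ_{i_t} Q_{t−1}, each Q_{t−1} can twist on G_{i_t}, and Q_r = P, one has Σ_{t=1}^{r} Ω(i_t, Q_{t−1}) = 0. -/

import Mathlib

/-- An edge of the integer lattice: `(p, true)` is the horizontal unit segment
from `p` to `p + (1, 0)`, and `(p, false)` is the vertical unit segment from
`p` to `p + (0, 1)`. -/
abbrev LatticeEdge : Type := (ℤ × ℤ) × Bool

/-- A lattice edge is horizontal if it is parallel to the x-axis. -/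
def IsHorizontalEdge (e : LatticeEdge) : Prop := e.2 = true

/-- A lattice edge is vertical if it is parallel to the y-axis. -/
def IsVerticalEdge (e : LatticeEdge) : Prop := e.2 = false

/-- The two endpoints of a lattice edge. -/
def endpointsOf (e : LatticeEdge) : Set (ℤ × ℤ) :=
  if e.2 then {e.1, (e.1.1 + 1, e.1.2)} else {e.1, (e.1.1, e.1.2 + 1)}

/-- The south side of the unit tile with lower-left corner `c`. -/
def southSide (c : ℤ × ℤ) : LatticeEdge := (c, true)

/-- The north side of the unit tile with lower-left corner `c`. -/
def northSide (c : ℤ × ℤ) : LatticeEdge := ((c.1, c.2 + 1), true)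

/-- The west side of the unit tile with lower-left corner `c`. -/
def westSide (c : ℤ × ℤ) : LatticeEdge := (c, false)

/-- The east side of the unit tile with lower-left corner `c`. -/
def eastSide (c : ℤ × ℤ) : LatticeEdge := ((c.1 + 1, c.2), false)

/-- The four sides of the unit tile with lower-left corner `c`. -/
def tileSides (c : ℤ × ℤ) : Set LatticeEdge :=
  {southSide c, northSide c, westSide c, eastSide c}

/-- The four corners of the unit tile with lower-left corner `c`. -/
def tileCorners (c : ℤ × ℤ) : Set (ℤ × ℤ) :=
  {c, (c.1 + 1, c.2), (c.1, c.2 + 1), (c.1 + 1, c.2 + 1)}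

/-- A snake graph with `d ≥ 1` tiles: tile `1` has lower-left corner `(0, 0)`,
and each subsequent tile is the translate of the previous one by one unit to
the right or one unit up.  Tiles are indexed `1, …, d`; `corner i` is the
lower-left corner of tile `i`. -/
structure SnakeGraph where
  d : ℕ
  one_le_d : 1 ≤ d
  corner : ℕ → ℤ × ℤ
  corner_one : corner 1 = (0, 0)
  corner_succ : ∀ i, 1 ≤ i → i < d →
    corner (i + 1) = ((corner i).1 + 1, (corner i).2) ∨
      corner (i + 1) = ((corner i).1, (corner i).2 + 1)

namespace SnakeGraph

/-- The set of sides of tile `i` of `G`. -/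
def tile (G : SnakeGraph) (i : ℕ) : Set LatticeEdge := tileSides (G.corner i)

/-- The edge set of (the graph of) `G`: all sides of all tiles. -/
def edges (G : SnakeGraph) : Set LatticeEdge := ⋃ i ∈ Set.Icc 1 G.d, G.tile i

/-- The vertex set of `G`: all corners of all tiles. -/
def vertices (G : SnakeGraph) : Set (ℤ × ℤ) :=
  ⋃ i ∈ Set.Icc 1 G.d, tileCorners (G.corner i)

/-- A perfect matching of `G`: a set of edges of `G` such that every vertex of
`G` is incident to exactly one edge of the set. -/
def IsPerfectMatching (G : SnakeGraph) (P : Set LatticeEdge) : Prop :=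
  P ⊆ G.edges ∧ ∀ v ∈ G.vertices, ∃! e, e ∈ P ∧ v ∈ endpointsOf e

/-- `P` can twist on tile `i` if two of the four sides of tile `i` belong to `P`. -/
def CanTwist (G : SnakeGraph) (P : Set LatticeEdge) (i : ℕ) : Prop :=
  1 ≤ i ∧ i ≤ G.d ∧ (P ∩ G.tile i).ncard = 2

/-- The twist of `P` on tile `i`: replace the sides of tile `i` belonging to
`P` by the other sides of tile `i`. -/
def twist (G : SnakeGraph) (i : ℕ) (P : Set LatticeEdge) : Set LatticeEdge :=
  (P \ G.tile i) ∪ (G.tile i \ P)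

/-- A boundary edge of `G`: an edge which is a side of exactly one tile. -/
def IsBoundaryEdge (G : SnakeGraph) (e : LatticeEdge) : Prop :=
  ∃! i, (1 ≤ i ∧ i ≤ G.d) ∧ e ∈ G.tile i

/-- `P` is the minimal matching `P₋` of `G`: the perfect matching consisting
only of boundary edges which contains no vertical side of tile `1`. -/
def IsMinimalMatching (G : SnakeGraph) (P : Set LatticeEdge) : Prop :=
  G.IsPerfectMatching P ∧ (∀ e ∈ P, G.IsBoundaryEdge e) ∧
    ∀ e ∈ P ∩ G.tile 1, IsHorizontalEdge e

/-- `P` is the maximal matching `P₊` of `G`: the perfect matching consisting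
only of boundary edges other than the minimal one, i.e. the one containing a
vertical side of tile `1`. -/
def IsMaximalMatching (G : SnakeGraph) (P : Set LatticeEdge) : Prop :=
  G.IsPerfectMatching P ∧ (∀ e ∈ P, G.IsBoundaryEdge e) ∧
    ∃ e ∈ P ∩ G.tile 1, IsVerticalEdge e

/-- `G` is a straight snake graph: every tile is the translate of the previous
one by one unit to the right. -/
def IsStraight (G : SnakeGraph) : Prop :=
  ∀ i, 1 ≤ i → i < G.d → G.corner (i + 1) = ((G.corner i).1 + 1, (G.corner i).2)

end SnakeGraph

namespace SnakeCycle

open SnakeGraph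

/-! ### Basic facts about sides and endpoints -/

lemma side_ne_SN (c : ℤ × ℤ) : southSide c ≠ northSide c := by
  simp [southSide, northSide, Prod.ext_iff]

lemma side_ne_WE (c : ℤ × ℤ) : westSide c ≠ eastSide c := by
  simp [westSide, eastSide, Prod.ext_iff]

lemma side_ne_SW (c : ℤ × ℤ) : southSide c ≠ westSide c := by
  simp [southSide, westSide, Prod.ext_iff]

lemma side_ne_SE (c : ℤ × ℤ) : southSide c ≠ eastSide c := by
  simp [southSide, eastSide, Prod.ext_iff]

lemma side_ne_NW (c : ℤ × ℤ) : northSide c ≠ westSide c := by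
  simp [northSide, westSide, Prod.ext_iff]

lemma side_ne_NE (c : ℤ × ℤ) : northSide c ≠ eastSide c := by
  simp [northSide, eastSide, Prod.ext_iff]

lemma mem_tileSides (e : LatticeEdge) (c : ℤ × ℤ) :
    e ∈ tileSides c ↔ e = southSide c ∨ e = northSide c ∨ e = westSide c ∨ e = eastSide c := by
  simp [tileSides]

lemma endpoints_S (c : ℤ × ℤ) :
    endpointsOf (southSide c) = {c, (c.1 + 1, c.2)} := by
  simp [endpointsOf, southSide]

lemma endpoints_N (c : ℤ × ℤ) :
    endpointsOf (northSide c) = {(c.1, c.2 + 1), (c.1 + 1, c.2 + 1)} := by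
  simp [endpointsOf, northSide]

lemma endpoints_W (c : ℤ × ℤ) :
    endpointsOf (westSide c) = {c, (c.1, c.2 + 1)} := by
  simp [endpointsOf, westSide]

lemma endpoints_E (c : ℤ × ℤ) :
    endpointsOf (eastSide c) = {(c.1 + 1, c.2), (c.1 + 1, c.2 + 1)} := by
  simp [endpointsOf, eastSide]

lemma side_endpoints_sub (c : ℤ × ℤ) (e : LatticeEdge) (he : e ∈ tileSides c) :
    endpointsOf e ⊆ tileCorners c := by
  rcases (mem_tileSides e c).1 he with rfl | rfl | rfl | rfl <;>
    simp only [endpoints_S, endpoints_N, endpoints_W, endpoints_E, tileCorners] <;>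
    intro v hv <;> simp at hv ⊢ <;> tauto

/-! ### Snake structure -/

lemma corner_sum (G : SnakeGraph) :
    ∀ i, 1 ≤ i → i ≤ G.d → (G.corner i).1 + (G.corner i).2 = (i : ℤ) - 1 := by
  intro i hi
  induction i with
  | zero => omega
  | succ n ih =>
    intro hle
    rcases Nat.eq_or_lt_of_le hi with h1 | h1
    · have : n + 1 = 1 := h1.symm
      rw [this, G.corner_one]; simp
    · have hn1 : 1 ≤ n := by omega
      have hnd : n < G.d := by omega
      have := ih hn1 (by omega)
      rcases G.corner_succ n hn1 hnd with h | h <;> rw [h] <;> push_cast <;> omega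

lemma mem_tile_sum (G : SnakeGraph) (i : ℕ) (hi1 : 1 ≤ i) (hid : i ≤ G.d)
    (e : LatticeEdge) (he : e ∈ G.tile i) :
    e.1.1 + e.1.2 = (i : ℤ) - 1 ∨ e.1.1 + e.1.2 = (i : ℤ) := by
  have hs := corner_sum G i hi1 hid
  rcases (mem_tileSides e (G.corner i)).1 he with rfl | rfl | rfl | rfl <;>
    simp [southSide, northSide, westSide, eastSide] <;> omega

lemma tile_disj (G : SnakeGraph) (i j : ℕ) (hi1 : 1 ≤ i) (hid : i ≤ G.d)
    (hj1 : 1 ≤ j) (hjd : j ≤ G.d) (hij : i + 2 ≤ j ∨ j + 2 ≤ i)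
    (e : LatticeEdge) (hei : e ∈ G.tile i) (hej : e ∈ G.tile j) : False := by
  have h1 := mem_tile_sum G i hi1 hid e hei
  have h2 := mem_tile_sum G j hj1 hjd e hej
  have : ((i : ℤ) + 2 ≤ (j : ℤ)) ∨ ((j : ℤ) + 2 ≤ (i : ℤ)) := by
    rcases hij with h | h
    · left; exact_mod_cast Nat.cast_le.mpr h
    · right; exact_mod_cast Nat.cast_le.mpr h
  omega

lemma corners_mem_vertices (G : SnakeGraph) (i : ℕ) (hi1 : 1 ≤ i) (hid : i ≤ G.d) :
    tileCorners (G.corner i) ⊆ G.vertices := by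
  intro v hv
  exact Set.mem_biUnion (Set.mem_Icc.mpr ⟨hi1, hid⟩) hv

lemma tile_sub_edges (G : SnakeGraph) (i : ℕ) (hi1 : 1 ≤ i) (hid : i ≤ G.d) :
    G.tile i ⊆ G.edges := by
  intro e he
  exact Set.mem_biUnion (Set.mem_Icc.mpr ⟨hi1, hid⟩) he

end SnakeCycle

namespace SnakeCycle

open SnakeGraph

/-! ### Matchings: unique cover, pair lemma -/

lemma noAdj (G : SnakeGraph) (M : Set LatticeEdge) (hM : G.IsPerfectMatching M)
    (v : ℤ × ℤ) (hv : v ∈ G.vertices) (e1 e2 : LatticeEdge)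
    (h1 : e1 ∈ M) (h2 : e2 ∈ M) (hv1 : v ∈ endpointsOf e1) (hv2 : v ∈ endpointsOf e2) :
    e1 = e2 := by
  obtain ⟨e, _, hu⟩ := hM.2 v hv
  rw [hu e1 ⟨h1, hv1⟩, hu e2 ⟨h2, hv2⟩]

lemma mem_twist_of_mem_tile (G : SnakeGraph) (i : ℕ) (M : Set LatticeEdge)
    (e : LatticeEdge) (he : e ∈ G.tile i) :
    e ∈ G.twist i M ↔ e ∉ M := by
  simp [SnakeGraph.twist, he]

lemma mem_twist_of_not_mem_tile (G : SnakeGraph) (i : ℕ) (M : Set LatticeEdge)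
    (e : LatticeEdge) (he : e ∉ G.tile i) :
    e ∈ G.twist i M ↔ e ∈ M := by
  simp [SnakeGraph.twist, he]

lemma twist_twist (G : SnakeGraph) (i : ℕ) (M : Set LatticeEdge) :
    G.twist i (G.twist i M) = M := by
  ext e
  by_cases h : e ∈ G.tile i <;> by_cases h2 : e ∈ M <;>
    simp [SnakeGraph.twist, h, h2]

lemma twist_comm (G : SnakeGraph) (i j : ℕ) (M : Set LatticeEdge) :
    G.twist i (G.twist j M) = G.twist j (G.twist i M) := by
  ext e
  by_cases h1 : e ∈ G.tile i <;> by_cases h2 : e ∈ G.tile j <;> by_cases h3 : e ∈ M <;>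
    simp [SnakeGraph.twist, h1, h2, h3]

/-- The fundamental dichotomy: a matching that can twist on tile `i` contains
either the two horizontal sides or the two vertical sides of tile `i`. -/
lemma pair_cases (G : SnakeGraph) (M : Set LatticeEdge) (hM : G.IsPerfectMatching M)
    (i : ℕ) (h : G.CanTwist M i) :
    (southSide (G.corner i) ∈ M ∧ northSide (G.corner i) ∈ M ∧
      westSide (G.corner i) ∉ M ∧ eastSide (G.corner i) ∉ M) ∨
    (southSide (G.corner i) ∉ M ∧ northSide (G.corner i) ∉ M ∧
      westSide (G.corner i) ∈ M ∧ eastSide (G.corner i) ∈ M) := by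
  obtain ⟨hi1, hid, hcard⟩ := h
  set c := G.corner i with hc
  obtain ⟨a, b, hab, hset⟩ := Set.ncard_eq_two.mp hcard
  have ha : a ∈ M ∧ a ∈ G.tile i := by
    have : a ∈ M ∩ G.tile i := hset ▸ (by simp)
    exact this
  have hb : b ∈ M ∧ b ∈ G.tile i := by
    have : b ∈ M ∩ G.tile i := hset ▸ (by simp)
    exact this
  have hvert := corners_mem_vertices G i hi1 hid
  -- no two adjacent sides can both be in M
  have hadj : ∀ e1 e2 : LatticeEdge, e1 ∈ M → e2 ∈ M → e1 ≠ e2 →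
      ∀ v ∈ tileCorners c, v ∈ endpointsOf e1 → v ∈ endpointsOf e2 → False := by
    intro e1 e2 h1 h2 hne v hvc hv1 hv2
    exact hne (noAdj G M hM v (hvert hvc) e1 e2 h1 h2 hv1 hv2)
  have hmemc : ∀ x : LatticeEdge, x ∈ G.tile i →
      x ∈ M → (x = a ∨ x = b) := by
    intro x hxt hxM
    have : x ∈ M ∩ G.tile i := ⟨hxM, hxt⟩
    rw [hset] at this
    simpa using this
  have corner1 : c ∈ tileCorners c := by simp [tileCorners]
  have corner2 : ((c.1 + 1, c.2) : ℤ × ℤ) ∈ tileCorners c := by simp [tileCorners]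
  have corner3 : ((c.1, c.2 + 1) : ℤ × ℤ) ∈ tileCorners c := by simp [tileCorners]
  have corner4 : ((c.1 + 1, c.2 + 1) : ℤ × ℤ) ∈ tileCorners c := by simp [tileCorners]
  -- case analysis on which sides a and b are
  have haT := (mem_tileSides a c).1 ha.2
  have hbT := (mem_tileSides b c).1 hb.2
  have hSW : ¬ (southSide c ∈ M ∧ westSide c ∈ M) := by
    rintro ⟨h1, h2⟩
    exact hadj _ _ h1 h2 (side_ne_SW c) c corner1
      (by rw [endpoints_S]; simp) (by rw [endpoints_W]; simp)
  have hSE : ¬ (southSide c ∈ M ∧ eastSide c ∈ M) := by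
    rintro ⟨h1, h2⟩
    exact hadj _ _ h1 h2 (side_ne_SE c) _ corner2
      (by rw [endpoints_S]; simp) (by rw [endpoints_E]; simp)
  have hNW : ¬ (northSide c ∈ M ∧ westSide c ∈ M) := by
    rintro ⟨h1, h2⟩
    exact hadj _ _ h1 h2 (side_ne_NW c) _ corner3
      (by rw [endpoints_N]; simp) (by rw [endpoints_W]; simp)
  have hNE : ¬ (northSide c ∈ M ∧ eastSide c ∈ M) := by
    rintro ⟨h1, h2⟩
    exact hadj _ _ h1 h2 (side_ne_NE c) _ corner4
      (by rw [endpoints_N]; simp) (by rw [endpoints_E]; simp)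
  rcases haT with rfl | rfl | rfl | rfl <;> rcases hbT with rfl | rfl | rfl | rfl
  · exact absurd rfl hab
  · -- a = S, b = N
    left
    refine ⟨ha.1, hb.1, fun hW => hSW ⟨ha.1, hW⟩, fun hE => hSE ⟨ha.1, hE⟩⟩
  · exact absurd ⟨ha.1, hb.1⟩ hSW
  · exact absurd ⟨ha.1, hb.1⟩ hSE
  · left
    refine ⟨hb.1, ha.1, fun hW => hSW ⟨hb.1, hW⟩, fun hE => hSE ⟨hb.1, hE⟩⟩
  · exact absurd rfl hab
  · exact absurd ⟨ha.1, hb.1⟩ hNW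
  · exact absurd ⟨ha.1, hb.1⟩ hNE
  · exact absurd ⟨hb.1, ha.1⟩ hSW
  · exact absurd ⟨hb.1, ha.1⟩ hNW
  · exact absurd rfl hab
  · right
    refine ⟨fun hS => hSW ⟨hS, ha.1⟩, fun hN => hNW ⟨hN, ha.1⟩, ha.1, hb.1⟩
  · exact absurd ⟨hb.1, ha.1⟩ hSE
  · exact absurd ⟨hb.1, ha.1⟩ hNE
  · right
    refine ⟨fun hS => hSE ⟨hS, ha.1⟩, fun hN => hNE ⟨hN, ha.1⟩, hb.1, ha.1⟩
  · exact absurd rfl hab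

end SnakeCycle

namespace SnakeCycle

open SnakeGraph

lemma twist_inter_tile_H (G : SnakeGraph) (M : Set LatticeEdge) (i : ℕ)
    (hS : southSide (G.corner i) ∈ M) (hN : northSide (G.corner i) ∈ M)
    (hW : westSide (G.corner i) ∉ M) (hE : eastSide (G.corner i) ∉ M) :
    G.twist i M ∩ G.tile i = {westSide (G.corner i), eastSide (G.corner i)} := by
  ext e
  constructor
  · rintro ⟨he, heT⟩
    have := (mem_twist_of_mem_tile G i M e heT).1 he
    rcases (mem_tileSides e (G.corner i)).1 heT with rfl | rfl | rfl | rfl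
    · exact absurd hS this
    · exact absurd hN this
    · simp
    · simp
  · intro he
    rcases he with rfl | rfl <;>
    · constructor
      · rw [mem_twist_of_mem_tile G i M _ (by simp [SnakeGraph.tile, tileSides])]
        assumption
      · simp [SnakeGraph.tile, tileSides]

lemma twist_inter_tile_V (G : SnakeGraph) (M : Set LatticeEdge) (i : ℕ)
    (hS : southSide (G.corner i) ∉ M) (hN : northSide (G.corner i) ∉ M)
    (hW : westSide (G.corner i) ∈ M) (hE : eastSide (G.corner i) ∈ M) :
    G.twist i M ∩ G.tile i = {southSide (G.corner i), northSide (G.corner i)} := by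
  ext e
  constructor
  · rintro ⟨he, heT⟩
    have := (mem_twist_of_mem_tile G i M e heT).1 he
    rcases (mem_tileSides e (G.corner i)).1 heT with rfl | rfl | rfl | rfl
    · simp
    · simp
    · exact absurd hW this
    · exact absurd hE this
  · intro he
    rcases he with rfl | rfl <;>
    · constructor
      · rw [mem_twist_of_mem_tile G i M _ (by simp [SnakeGraph.tile, tileSides])]
        assumption
      · simp [SnakeGraph.tile, tileSides]

lemma canTwist_twist_self (G : SnakeGraph) (M : Set LatticeEdge)
    (hM : G.IsPerfectMatching M) (i : ℕ) (h : G.CanTwist M i) :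
    G.CanTwist (G.twist i M) i := by
  obtain ⟨hi1, hid, hcard⟩ := h
  refine ⟨hi1, hid, ?_⟩
  rcases pair_cases G M hM i ⟨hi1, hid, hcard⟩ with ⟨hS, hN, hW, hE⟩ | ⟨hS, hN, hW, hE⟩
  · rw [twist_inter_tile_H G M i hS hN hW hE]
    exact Set.ncard_pair (side_ne_WE _)
  · rw [twist_inter_tile_V G M i hS hN hW hE]
    exact Set.ncard_pair (side_ne_SN _)

/-- helper for uniqueness of cover at a tile corner after a twist -/
lemma corner_cover (G : SnakeGraph) (i : ℕ) (M : Set LatticeEdge)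
    (hM : G.IsPerfectMatching M) (v : ℤ × ℤ) (hv : v ∈ G.vertices)
    (hin : LatticeEdge) (hout : LatticeEdge)
    (hinT : hin ∈ G.tile i) (houtT : hout ∈ G.tile i)
    (hinM : hin ∈ M) (houtM : hout ∉ M)
    (hvin : v ∈ endpointsOf hin) (hvout : v ∈ endpointsOf hout)
    (hother : ∀ e ∈ G.tile i, e ∉ M → v ∈ endpointsOf e → e = hout) :
    ∃! e, e ∈ G.twist i M ∧ v ∈ endpointsOf e := by
  refine ⟨hout, ⟨Or.inr ⟨houtT, houtM⟩, hvout⟩, ?_⟩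
  rintro e' ⟨he', hve'⟩
  by_cases heT : e' ∈ G.tile i
  · have he'M : e' ∉ M := (mem_twist_of_mem_tile G i M e' heT).1 he'
    exact hother e' heT he'M hve'
  · have he'M : e' ∈ M := (mem_twist_of_not_mem_tile G i M e' heT).1 he'
    have : e' = hin := noAdj G M hM v hv e' hin he'M hinM hve' hvin
    exact absurd (this ▸ hinT) heT

lemma twist_isPerfectMatching (G : SnakeGraph) (M : Set LatticeEdge)
    (hM : G.IsPerfectMatching M) (i : ℕ) (h : G.CanTwist M i) :
    G.IsPerfectMatching (G.twist i M) := by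
  obtain ⟨hi1, hid, hcard⟩ := h
  have htsub := tile_sub_edges G i hi1 hid
  constructor
  · rintro e (⟨heM, -⟩ | ⟨heT, -⟩)
    · exact hM.1 heM
    · exact htsub heT
  · intro v hv
    set c := G.corner i with hc
    by_cases hvc : v ∈ tileCorners c
    · have hpair := pair_cases G M hM i ⟨hi1, hid, hcard⟩
      have hST : southSide c ∈ G.tile i := by simp [SnakeGraph.tile, tileSides, hc]
      have hNT : northSide c ∈ G.tile i := by simp [SnakeGraph.tile, tileSides, hc]
      have hWT : westSide c ∈ G.tile i := by simp [SnakeGraph.tile, tileSides, hc]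
      have hET : eastSide c ∈ G.tile i := by simp [SnakeGraph.tile, tileSides, hc]
      have hmemT : ∀ e ∈ G.tile i, e = southSide c ∨ e = northSide c ∨
          e = westSide c ∨ e = eastSide c := by
        intro e he; exact (mem_tileSides e c).1 he
      rcases hvc with rfl | hv2 | hv3 | hv4
      · -- v = c : incident sides S (horizontal) and W (vertical)
        rcases hpair with ⟨hS, hN, hW, hE⟩ | ⟨hS, hN, hW, hE⟩
        · refine corner_cover G i M hM c hv (southSide c) (westSide c) hST hWT hS hW
            (by rw [endpoints_S]; simp) (by rw [endpoints_W]; simp) ?_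
          intro e heT heM hve
          rcases hmemT e heT with rfl | rfl | rfl | rfl
          · exact absurd hS heM
          · exact absurd hN heM
          · rfl
          · rw [endpoints_E] at hve
            simp [Prod.ext_iff] at hve <;> omega
        · refine corner_cover G i M hM c hv (westSide c) (southSide c) hWT hST hW hS
            (by rw [endpoints_W]; simp) (by rw [endpoints_S]; simp) ?_
          intro e heT heM hve
          rcases hmemT e heT with rfl | rfl | rfl | rfl
          · rfl
          · rw [endpoints_N] at hve
            simp [Prod.ext_iff] at hve <;> omega
          · exact absurd hW heM
          · exact absurd hE heM
      · -- v = (c.1+1, c.2) : incident sides S and E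
        subst hv2
        rcases hpair with ⟨hS, hN, hW, hE⟩ | ⟨hS, hN, hW, hE⟩
        · refine corner_cover G i M hM _ hv (southSide c) (eastSide c) hST hET hS hE
            (by rw [endpoints_S]; simp) (by rw [endpoints_E]; simp) ?_
          intro e heT heM hve
          rcases hmemT e heT with rfl | rfl | rfl | rfl
          · exact absurd hS heM
          · exact absurd hN heM
          · rw [endpoints_W] at hve
            simp [Prod.ext_iff] at hve <;> omega
          · rfl
        · refine corner_cover G i M hM _ hv (eastSide c) (southSide c) hET hST hE hS
            (by rw [endpoints_E]; simp) (by rw [endpoints_S]; simp) ?_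
          intro e heT heM hve
          rcases hmemT e heT with rfl | rfl | rfl | rfl
          · rfl
          · rw [endpoints_N] at hve
            simp [Prod.ext_iff] at hve <;> omega
          · exact absurd hW heM
          · exact absurd hE heM
      · -- v = (c.1, c.2+1) : incident sides N and W
        subst hv3
        rcases hpair with ⟨hS, hN, hW, hE⟩ | ⟨hS, hN, hW, hE⟩
        · refine corner_cover G i M hM _ hv (northSide c) (westSide c) hNT hWT hN hW
            (by rw [endpoints_N]; simp) (by rw [endpoints_W]; simp) ?_
          intro e heT heM hve
          rcases hmemT e heT with rfl | rfl | rfl | rfl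
          · exact absurd hS heM
          · exact absurd hN heM
          · rfl
          · rw [endpoints_E] at hve
            simp [Prod.ext_iff] at hve <;> omega
        · refine corner_cover G i M hM _ hv (westSide c) (northSide c) hWT hNT hW hN
            (by rw [endpoints_W]; simp) (by rw [endpoints_N]; simp) ?_
          intro e heT heM hve
          rcases hmemT e heT with rfl | rfl | rfl | rfl
          · rw [endpoints_S] at hve
            simp [Prod.ext_iff] at hve <;> omega
          · rfl
          · exact absurd hW heM
          · exact absurd hE heM
      · -- v = (c.1+1, c.2+1) : incident sides N and E
        subst hv4
        rcases hpair with ⟨hS, hN, hW, hE⟩ | ⟨hS, hN, hW, hE⟩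
        · refine corner_cover G i M hM _ hv (northSide c) (eastSide c) hNT hET hN hE
            (by rw [endpoints_N]; simp) (by rw [endpoints_E]; simp) ?_
          intro e heT heM hve
          rcases hmemT e heT with rfl | rfl | rfl | rfl
          · exact absurd hS heM
          · exact absurd hN heM
          · rw [endpoints_W] at hve
            simp [Prod.ext_iff] at hve <;> omega
          · rfl
        · refine corner_cover G i M hM _ hv (eastSide c) (northSide c) hET hNT hE hN
            (by rw [endpoints_E]; simp) (by rw [endpoints_N]; simp) ?_
          intro e heT heM hve
          rcases hmemT e heT with rfl | rfl | rfl | rfl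
          · rw [endpoints_S] at hve
            simp [Prod.ext_iff] at hve <;> omega
          · rfl
          · exact absurd hW heM
          · exact absurd hE heM
    · -- v not a corner of tile i : coverage unchanged
      obtain ⟨e, ⟨heM, hve⟩, hu⟩ := hM.2 v hv
      have hnotT : ∀ e' : LatticeEdge, v ∈ endpointsOf e' → e' ∉ G.tile i := by
        intro e' hve' he'T
        exact hvc (side_endpoints_sub c e' he'T hve')
      refine ⟨e, ⟨(mem_twist_of_not_mem_tile G i M e (hnotT e hve)).2 heM, hve⟩, ?_⟩
      rintro e' ⟨he', hve'⟩
      have : e' ∈ M := (mem_twist_of_not_mem_tile G i M e' (hnotT e' hve')).1 he'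
      exact hu e' ⟨this, hve'⟩

end SnakeCycle

namespace SnakeCycle

open SnakeGraph
open scoped Classical

/-! ### Height function and twist directions -/

/-- Weight of a lattice edge, used to build the height function. -/
def wgt (e : LatticeEdge) : ℤ :=
  if e.2 then (if Even (e.1.1 + e.1.2) then -e.1.2 else e.1.2) else 0

/-- Sign of a tile, alternating along the snake. -/
def sgn (c : ℤ × ℤ) : ℤ := if Even (c.1 + c.2) then 1 else -1

lemma sgn_pm (c : ℤ × ℤ) : sgn c = 1 ∨ sgn c = -1 := by
  unfold sgn; split <;> simp

lemma wgt_S_add_N (c : ℤ × ℤ) :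
    wgt (southSide c) + wgt (northSide c) = sgn c := by
  simp only [wgt, southSide, northSide, sgn]
  by_cases h : Even (c.1 + c.2)
  · have h2 : ¬ Even (c.1 + (c.2 + 1)) := by
      simp [← add_assoc, Int.even_add_one, h]
    simp [h, h2]
  · have h2 : Even (c.1 + (c.2 + 1)) := by
      have := Int.even_add_one.mpr (by simpa using h)
      simpa [← add_assoc] using this
    simp [h, h2] <;> ring

lemma wgt_W (c : ℤ × ℤ) : wgt (westSide c) = 0 := by simp [wgt, westSide]

lemma wgt_E (c : ℤ × ℤ) : wgt (eastSide c) = 0 := by simp [wgt, eastSide]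

lemma sgn_right (c : ℤ × ℤ) : sgn (c.1 + 1, c.2) = -sgn c := by
  simp only [sgn]
  have : c.1 + 1 + c.2 = (c.1 + c.2) + 1 := by ring
  rw [this]
  by_cases h : Even (c.1 + c.2)
  · have : ¬ Even ((c.1 + c.2) + 1) := by simp [Int.even_add_one, h]
    simp [h, this]
  · have : Even ((c.1 + c.2) + 1) := Int.even_add_one.mpr h
    simp [h, this]

lemma sgn_up (c : ℤ × ℤ) : sgn (c.1, c.2 + 1) = -sgn c := by
  simp only [sgn]
  have : c.1 + (c.2 + 1) = (c.1 + c.2) + 1 := by rw [add_assoc]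
  rw [this]
  by_cases h : Even (c.1 + c.2)
  · have : ¬ Even ((c.1 + c.2) + 1) := by simp [Int.even_add_one, h]
    simp [h, this]
  · have : Even ((c.1 + c.2) + 1) := Int.even_add_one.mpr h
    simp [h, this]

/-- The Finset of sides of the tile with corner `c`. -/
def tfin (c : ℤ × ℤ) : Finset LatticeEdge :=
  {southSide c, northSide c, westSide c, eastSide c}

lemma tfin_coe (c : ℤ × ℤ) : (tfin c : Set LatticeEdge) = tileSides c := by
  simp [tfin, tileSides]

/-- The Finset of all edges of `G`. -/
def sfin (G : SnakeGraph) : Finset LatticeEdge :=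
  (Finset.Icc 1 G.d).biUnion fun i => tfin (G.corner i)

lemma tfin_sub_sfin (G : SnakeGraph) (i : ℕ) (hi1 : 1 ≤ i) (hid : i ≤ G.d) :
    tfin (G.corner i) ⊆ sfin G := by
  intro e he
  exact Finset.mem_biUnion.mpr ⟨i, Finset.mem_Icc.mpr ⟨hi1, hid⟩, he⟩

/-- Height of a set of edges. -/
noncomputable def ht (G : SnakeGraph) (M : Set LatticeEdge) : ℤ :=
  ∑ e ∈ sfin G, Set.indicator M wgt e

/-- Bound for heights. -/
noncomputable def htB (G : SnakeGraph) : ℤ := ∑ e ∈ sfin G, |wgt e|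

lemma ht_bound (G : SnakeGraph) (M : Set LatticeEdge) : |ht G M| ≤ htB G := by
  refine le_trans (Finset.abs_sum_le_sum_abs _ _) (Finset.sum_le_sum ?_)
  intro e _
  by_cases h : e ∈ M <;> simp [Set.indicator, h]

/-- Direction of the available twist at tile `i`. -/
noncomputable def eps (G : SnakeGraph) (i : ℕ) (M : Set LatticeEdge) : ℤ :=
  if southSide (G.corner i) ∈ M then -(sgn (G.corner i)) else sgn (G.corner i)

lemma eps_pm (G : SnakeGraph) (i : ℕ) (M : Set LatticeEdge) :
    eps G i M = 1 ∨ eps G i M = -1 := by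
  unfold eps
  rcases sgn_pm (G.corner i) with h | h <;> rw [h] <;> split <;> simp

lemma eps_twist_self (G : SnakeGraph) (i : ℕ) (M : Set LatticeEdge) :
    eps G i (G.twist i M) = -eps G i M := by
  have hST : southSide (G.corner i) ∈ G.tile i := by simp [SnakeGraph.tile, tileSides]
  unfold eps
  rw [mem_twist_of_mem_tile G i M _ hST]
  by_cases h : southSide (G.corner i) ∈ M <;> simp [h]

lemma eps_twist_other (G : SnakeGraph) (i j : ℕ)
    (hi1 : 1 ≤ i) (hid : i ≤ G.d) (hj1 : 1 ≤ j) (hjd : j ≤ G.d)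
    (hij : i + 2 ≤ j ∨ j + 2 ≤ i) (M : Set LatticeEdge) :
    eps G j (G.twist i M) = eps G j M := by
  have hST : southSide (G.corner j) ∈ G.tile j := by simp [SnakeGraph.tile, tileSides]
  have : southSide (G.corner j) ∉ G.tile i := fun hmem =>
    tile_disj G i j hi1 hid hj1 hjd hij _ hmem hST
  unfold eps
  rw [mem_twist_of_not_mem_tile G i M _ this]

lemma twist_inter_other (G : SnakeGraph) (i j : ℕ)
    (hi1 : 1 ≤ i) (hid : i ≤ G.d) (hj1 : 1 ≤ j) (hjd : j ≤ G.d)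
    (hij : i + 2 ≤ j ∨ j + 2 ≤ i) (M : Set LatticeEdge) :
    G.twist i M ∩ G.tile j = M ∩ G.tile j := by
  ext e
  constructor
  · rintro ⟨he, heT⟩
    have heTi : e ∉ G.tile i := fun hmem => tile_disj G i j hi1 hid hj1 hjd hij e hmem heT
    exact ⟨(mem_twist_of_not_mem_tile G i M e heTi).1 he, heT⟩
  · rintro ⟨he, heT⟩
    have heTi : e ∉ G.tile i := fun hmem => tile_disj G i j hi1 hid hj1 hjd hij e hmem heT
    exact ⟨(mem_twist_of_not_mem_tile G i M e heTi).2 he, heT⟩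

lemma canTwist_twist_other (G : SnakeGraph) (i j : ℕ) (hi1 : 1 ≤ i) (hid : i ≤ G.d)
    (hij : i + 2 ≤ j ∨ j + 2 ≤ i) (M : Set LatticeEdge) (h : G.CanTwist M j) :
    G.CanTwist (G.twist i M) j := by
  obtain ⟨hj1, hjd, hcard⟩ := h
  exact ⟨hj1, hjd, by rw [twist_inter_other G i j hi1 hid hj1 hjd hij M]; exact hcard⟩

lemma canTwist_untwist_other (G : SnakeGraph) (i j : ℕ) (hi1 : 1 ≤ i) (hid : i ≤ G.d)
    (hij : i + 2 ≤ j ∨ j + 2 ≤ i) (M : Set LatticeEdge) (h : G.CanTwist (G.twist i M) j) :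
    G.CanTwist M j := by
  obtain ⟨hj1, hjd, hcard⟩ := h
  rw [twist_inter_other G i j hi1 hid hj1 hjd hij M] at hcard
  exact ⟨hj1, hjd, hcard⟩

/-- The key step formula: twisting changes the height by `eps`. -/
lemma ht_twist (G : SnakeGraph) (M : Set LatticeEdge) (hM : G.IsPerfectMatching M)
    (i : ℕ) (h : G.CanTwist M i) :
    ht G (G.twist i M) = ht G M + eps G i M := by
  obtain ⟨hi1, hid, hcard⟩ := h
  set c := G.corner i with hc
  have hsub := tfin_sub_sfin G i hi1 hid
  have key : ht G (G.twist i M) - ht G M =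
      ∑ e ∈ sfin G, (Set.indicator (G.twist i M) wgt e - Set.indicator M wgt e) := by
    rw [Finset.sum_sub_distrib]
    unfold ht
    ring
  have hzero : ∀ e ∈ sfin G, e ∉ tfin c →
      Set.indicator (G.twist i M) wgt e - Set.indicator M wgt e = 0 := by
    intro e _ heT
    have : e ∉ G.tile i := by
      rw [SnakeGraph.tile, ← hc, ← tfin_coe]
      exact_mod_cast heT
    have hmem := mem_twist_of_not_mem_tile G i M e this
    by_cases h2 : e ∈ M
    · rw [Set.indicator_of_mem (hmem.2 h2) wgt, Set.indicator_of_mem h2 wgt]; ring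
    · rw [Set.indicator_of_notMem (fun hx => h2 (hmem.1 hx)) wgt,
        Set.indicator_of_notMem h2 wgt]; ring
  have hsum : ∑ e ∈ sfin G, (Set.indicator (G.twist i M) wgt e - Set.indicator M wgt e) =
      ∑ e ∈ tfin c, (Set.indicator (G.twist i M) wgt e - Set.indicator M wgt e) :=
    (Finset.sum_subset hsub (fun e he hne => hzero e he hne)).symm
  have htfin : ∀ e ∈ tfin c, e ∈ G.tile i := by
    intro e he
    rw [SnakeGraph.tile, ← hc, ← tfin_coe]
    exact_mod_cast he
  have hSmem : southSide c ∈ G.tile i := htfin _ (by simp [tfin])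
  have hNmem : northSide c ∈ G.tile i := htfin _ (by simp [tfin])
  have hWmem : westSide c ∈ G.tile i := htfin _ (by simp [tfin])
  have hEmem : eastSide c ∈ G.tile i := htfin _ (by simp [tfin])
  have hexp : ∑ e ∈ tfin c, (Set.indicator (G.twist i M) wgt e - Set.indicator M wgt e) =
      (Set.indicator (G.twist i M) wgt (southSide c) - Set.indicator M wgt (southSide c)) +
      (Set.indicator (G.twist i M) wgt (northSide c) - Set.indicator M wgt (northSide c)) +
      (Set.indicator (G.twist i M) wgt (westSide c) - Set.indicator M wgt (westSide c)) +
      (Set.indicator (G.twist i M) wgt (eastSide c) - Set.indicator M wgt (eastSide c)) := by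
    rw [tfin]
    rw [Finset.sum_insert (by simp [side_ne_SN c, side_ne_SW c, side_ne_SE c]),
      Finset.sum_insert (by simp [side_ne_NW c, side_ne_NE c]),
      Finset.sum_insert (by simp [side_ne_WE c])]
    simp
    ring
  rcases pair_cases G M hM i ⟨hi1, hid, hcard⟩ with ⟨hS, hN, hW, hE⟩ | ⟨hS, hN, hW, hE⟩
  · have h1 : southSide c ∉ G.twist i M := fun hx => ((mem_twist_of_mem_tile G i M _ hSmem).1 hx) hS
    have h2 : northSide c ∉ G.twist i M := fun hx => ((mem_twist_of_mem_tile G i M _ hNmem).1 hx) hN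
    have h3 : westSide c ∈ G.twist i M := (mem_twist_of_mem_tile G i M _ hWmem).2 hW
    have h4 : eastSide c ∈ G.twist i M := (mem_twist_of_mem_tile G i M _ hEmem).2 hE
    have heq : eps G i M = -(sgn c) := by unfold eps; rw [← hc, if_pos hS]
    have : ht G (G.twist i M) - ht G M = -(sgn c) := by
      rw [key, hsum, hexp]
      rw [Set.indicator_of_notMem h1, Set.indicator_of_notMem h2,
        Set.indicator_of_mem h3, Set.indicator_of_mem h4,
        Set.indicator_of_mem hS, Set.indicator_of_mem hN,
        Set.indicator_of_notMem hW, Set.indicator_of_notMem hE]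
      have := wgt_S_add_N c
      rw [wgt_W, wgt_E]
      try simp only [← hc]
      omega
    rw [heq]; omega
  · have h1 : southSide c ∈ G.twist i M := (mem_twist_of_mem_tile G i M _ hSmem).2 hS
    have h2 : northSide c ∈ G.twist i M := (mem_twist_of_mem_tile G i M _ hNmem).2 hN
    have h3 : westSide c ∉ G.twist i M := fun hx => ((mem_twist_of_mem_tile G i M _ hWmem).1 hx) hW
    have h4 : eastSide c ∉ G.twist i M := fun hx => ((mem_twist_of_mem_tile G i M _ hEmem).1 hx) hE
    have heq : eps G i M = sgn c := by unfold eps; rw [← hc, if_neg hS]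
    have : ht G (G.twist i M) - ht G M = sgn c := by
      rw [key, hsum, hexp]
      rw [Set.indicator_of_mem h1, Set.indicator_of_mem h2,
        Set.indicator_of_notMem h3, Set.indicator_of_notMem h4,
        Set.indicator_of_notMem hS, Set.indicator_of_notMem hN,
        Set.indicator_of_mem hW, Set.indicator_of_mem hE]
      have := wgt_S_add_N c
      rw [wgt_W, wgt_E]
      try simp only [← hc]
      omega
    rw [heq]; omega

end SnakeCycle

namespace SnakeCycle

open SnakeGraph

/-- On adjacent tiles, the two available twists go in opposite directions. -/
lemma eps_adjacent (G : SnakeGraph) (M : Set LatticeEdge) (hM : G.IsPerfectMatching M)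
    (i : ℕ) (hi : G.CanTwist M i) (hj : G.CanTwist M (i + 1)) :
    eps G (i + 1) M = -eps G i M := by
  obtain ⟨hi1, hid, hcard⟩ := hi
  obtain ⟨hj1, hjd, hcard'⟩ := hj
  have hilt : i < G.d := by omega
  have hpi := pair_cases G M hM i ⟨hi1, hid, hcard⟩
  have hpj := pair_cases G M hM (i + 1) ⟨hj1, hjd, hcard'⟩
  set c := G.corner i with hc
  rcases G.corner_succ i hi1 hilt with hcase | hcase
  · -- right step: eastSide c = westSide c'
    have hshare : westSide (G.corner (i + 1)) = eastSide c := by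
      rw [hcase, westSide, eastSide]
    rcases hpi with ⟨hS, hN, hW, hE⟩ | ⟨hS, hN, hW, hE⟩
    · -- i horizontal: leads to contradiction
      exfalso
      rcases hpj with ⟨hS', hN', hW', hE'⟩ | ⟨hS', hN', hW', hE'⟩
      · -- both horizontal: N and N' share top-right corner of tile i
        have hvc : ((c.1 + 1, c.2 + 1) : ℤ × ℤ) ∈ tileCorners c := by simp [tileCorners]
        have hv := corners_mem_vertices G i hi1 hid hvc
        have h1 : ((c.1 + 1, c.2 + 1) : ℤ × ℤ) ∈ endpointsOf (northSide c) := by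
          rw [endpoints_N]; simp
        have h2 : ((c.1 + 1, c.2 + 1) : ℤ × ℤ) ∈ endpointsOf (northSide (G.corner (i + 1))) := by
          rw [hcase, endpoints_N]; simp [hc]
        have := noAdj G M hM _ hv _ _ hN hN' h1 h2
        rw [hcase] at this
        simp [northSide, Prod.ext_iff, hc] at this <;> omega
      · rw [hshare] at hW'
        exact hE hW'
    · -- i vertical: then i+1 vertical as well
      rcases hpj with ⟨hS', hN', hW', hE'⟩ | ⟨hS', hN', hW', hE'⟩
      · exact absurd (hshare ▸ hE) hW'
      · -- compute the signs
        unfold eps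
        rw [← hc, if_neg hS, if_neg hS', hcase]
        have := sgn_right c
        rw [this]
  · -- up step: northSide c = southSide c'
    have hshare : southSide (G.corner (i + 1)) = northSide c := by
      rw [hcase, southSide, northSide]
    rcases hpi with ⟨hS, hN, hW, hE⟩ | ⟨hS, hN, hW, hE⟩
    · -- i horizontal: then i+1 horizontal as well
      rcases hpj with ⟨hS', hN', hW', hE'⟩ | ⟨hS', hN', hW', hE'⟩
      · unfold eps
        rw [← hc, if_pos hS, if_pos hS', hcase]
        have := sgn_up c
        rw [this] <;> ring
      · exact absurd (hshare ▸ hN) hS'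
    · -- i vertical: contradiction
      exfalso
      rcases hpj with ⟨hS', hN', hW', hE'⟩ | ⟨hS', hN', hW', hE'⟩
      · exact hN (hshare ▸ hS')
      · -- both vertical: W and W' share top-left corner of tile i
        have hvc : ((c.1, c.2 + 1) : ℤ × ℤ) ∈ tileCorners c := by simp [tileCorners]
        have hv := corners_mem_vertices G i hi1 hid hvc
        have h1 : ((c.1, c.2 + 1) : ℤ × ℤ) ∈ endpointsOf (westSide c) := by
          rw [endpoints_W]; simp
        have h2 : ((c.1, c.2 + 1) : ℤ × ℤ) ∈ endpointsOf (westSide (G.corner (i + 1))) := by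
          rw [hcase, endpoints_W]; simp [hc]
        have := noAdj G M hM _ hv _ _ hW hW' h1 h2
        rw [hcase] at this
        simp [westSide, Prod.ext_iff, hc] at this <;> omega

/-- If two distinct tiles can both twist with the same direction, they are
not adjacent. -/
lemma far_of_same_eps (G : SnakeGraph) (M : Set LatticeEdge) (hM : G.IsPerfectMatching M)
    (i j : ℕ) (hi : G.CanTwist M i) (hj : G.CanTwist M j) (hne : i ≠ j)
    (heq : eps G i M = eps G j M) : i + 2 ≤ j ∨ j + 2 ≤ i := by
  rcases Nat.lt_or_ge i j with h | h
  · rcases Nat.lt_or_ge (i + 1) j with h2 | h2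
    · left; omega
    · have : j = i + 1 := by omega
      subst this
      have := eps_adjacent G M hM i hi hj
      rcases eps_pm G i M with he | he <;> omega
  · rcases Nat.lt_or_ge (j + 1) i with h2 | h2
    · right; omega
    · have : i = j + 1 := by omega
      subst this
      have := eps_adjacent G M hM j hj hi
      rcases eps_pm G j M with he | he <;> omega

end SnakeCycle

namespace SnakeCycle

open SnakeGraph

/-! ### Twist walks -/

/-- Apply a sequence of twists. -/
def app (G : SnakeGraph) : Set LatticeEdge → List ℕ → Set LatticeEdge
  | P, [] => P
  | P, i :: L => app G (G.twist i P) L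

/-- Validity of a twist sequence. -/
def Valid (G : SnakeGraph) : Set LatticeEdge → List ℕ → Prop
  | _, [] => True
  | P, i :: L => G.CanTwist P i ∧ Valid G (G.twist i P) L

/-- Sum of `Ω` along a twist sequence. -/
def osum (G : SnakeGraph) (Ω : ℕ → Set LatticeEdge → ℤ) :
    Set LatticeEdge → List ℕ → ℤ
  | _, [] => 0
  | P, i :: L => Ω i P + osum G Ω (G.twist i P) L

/-- Shifted height, a natural number. -/
noncomputable def gval (G : SnakeGraph) (M : Set LatticeEdge) : ℕ :=
  (ht G M + htB G).toNat

lemma gval_eq (G : SnakeGraph) (M : Set LatticeEdge) :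
    (gval G M : ℤ) = ht G M + htB G := by
  have h := ht_bound G M
  rw [abs_le] at h
  rw [gval, Int.toNat_of_nonneg (by omega)]

/-- Sum of shifted heights along a twist sequence. -/
noncomputable def nsum (G : SnakeGraph) : Set LatticeEdge → List ℕ → ℕ
  | _, [] => 0
  | P, i :: L => gval G P + nsum G (G.twist i P) L

@[simp] lemma app_nil (G : SnakeGraph) (P : Set LatticeEdge) : app G P [] = P := rfl
@[simp] lemma app_cons (G : SnakeGraph) (P : Set LatticeEdge) (i : ℕ) (L : List ℕ) :
    app G P (i :: L) = app G (G.twist i P) L := rfl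

lemma app_append (G : SnakeGraph) (P : Set LatticeEdge) (A B : List ℕ) :
    app G P (A ++ B) = app G (app G P A) B := by
  induction A generalizing P with
  | nil => rfl
  | cons i A ih => simp [app, ih]

lemma valid_append (G : SnakeGraph) (P : Set LatticeEdge) (A B : List ℕ) :
    Valid G P (A ++ B) ↔ Valid G P A ∧ Valid G (app G P A) B := by
  induction A generalizing P with
  | nil => simp [Valid, app]
  | cons i A ih => simp [Valid, app, ih]; tauto

lemma osum_append (G : SnakeGraph) (Ω : ℕ → Set LatticeEdge → ℤ)
    (P : Set LatticeEdge) (A B : List ℕ) :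
    osum G Ω P (A ++ B) = osum G Ω P A + osum G Ω (app G P A) B := by
  induction A generalizing P with
  | nil => simp [osum, app]
  | cons i A ih => simp [osum, app, ih]; ring

lemma nsum_append (G : SnakeGraph) (P : Set LatticeEdge) (A B : List ℕ) :
    nsum G P (A ++ B) = nsum G P A + nsum G (app G P A) B := by
  induction A generalizing P with
  | nil => simp [nsum, app]
  | cons i A ih => simp [nsum, app, ih]; ring

lemma matching_app (G : SnakeGraph) (P : Set LatticeEdge) (L : List ℕ)
    (hP : G.IsPerfectMatching P) (hL : Valid G P L) :
    G.IsPerfectMatching (app G P L) := by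
  induction L generalizing P with
  | nil => exact hP
  | cons i L ih =>
    obtain ⟨h1, h2⟩ := hL
    exact ih (G.twist i P) (twist_isPerfectMatching G P hP i h1) h2

lemma valid_take (G : SnakeGraph) (P : Set LatticeEdge) (L : List ℕ)
    (hL : Valid G P L) (t : ℕ) : Valid G P (L.take t) := by
  have := (valid_append G P (L.take t) (L.drop t))
  rw [List.take_append_drop] at this
  exact ((this.1 hL).1)

lemma list_split_at (L : List ℕ) (t : ℕ) (h : t < L.length) :
    L = L.take t ++ L[t] :: L.drop (t + 1) := by
  conv_lhs => rw [← List.take_append_drop t L]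
  rw [List.drop_eq_getElem_cons h]

lemma take_succ_eq (L : List ℕ) (t : ℕ) (h : t < L.length) :
    L.take (t + 1) = L.take t ++ [L[t]] := by
  rw [List.take_succ, List.getElem?_eq_getElem h]
  rfl

lemma valid_index (G : SnakeGraph) (P : Set LatticeEdge) (L : List ℕ)
    (hL : Valid G P L) (t : ℕ) (h : t < L.length) :
    G.CanTwist (app G P (L.take t)) L[t] ∧
      app G P (L.take (t + 1)) = G.twist L[t] (app G P (L.take t)) := by
  have hsplit := list_split_at L t h
  have hv : Valid G (app G P (L.take t)) (L[t] :: L.drop (t + 1)) := by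
    have := (valid_append G P (L.take t) (L[t] :: L.drop (t + 1))).1 (hsplit ▸ hL)
    exact this.2
  refine ⟨hv.1, ?_⟩
  rw [take_succ_eq L t h, app_append]
  rfl

end SnakeCycle

namespace SnakeCycle

open SnakeGraph

theorem key (G : SnakeGraph) (Ω : ℕ → Set LatticeEdge → ℤ)
    (hΩa : ∀ i P, G.IsPerfectMatching P → G.CanTwist P i →
      Ω i (G.twist i P) = -Ω i P)
    (hΩb : ∀ i j P, G.IsPerfectMatching P → G.CanTwist P i → G.CanTwist P j →
      1 < ((i : ℤ) - (j : ℤ)).natAbs →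
      Ω i P + Ω j (G.twist i P) = Ω j P + Ω i (G.twist j P)) :
    ∀ n : ℕ, ∀ P : Set LatticeEdge, ∀ L : List ℕ, G.IsPerfectMatching P →
      Valid G P L → app G P L = P → L.length + nsum G P L ≤ n →
      osum G Ω P L = 0 := by
  intro n
  induction n using Nat.strong_induction_on with
  | _ n IH =>
  intro P L hP hV hC hle
  by_cases hnil : L = []
  · subst hnil; rfl
  set r := L.length with hrdef
  have hr : 1 ≤ r := by
    rcases L with _ | ⟨a, L0⟩
    · exact absurd rfl hnil
    · simp [hrdef]
  -- Step 1: rotate the cycle so that the base point has minimal height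
  obtain ⟨t₀, ht₀mem, hmin⟩ := Finset.exists_min_image (Finset.range r)
    (fun t => ht G (app G P (L.take t))) ⟨0, by simp; omega⟩
  have ht₀lt : t₀ < r := Finset.mem_range.mp ht₀mem
  set Q0 := app G P (L.take t₀) with hQ0def
  set L' := L.drop t₀ ++ L.take t₀ with hL'def
  have hVtake : Valid G P (L.take t₀) := valid_take G P L hV t₀
  have hVdrop : Valid G Q0 (L.drop t₀) := by
    have h1 : Valid G P (L.take t₀ ++ L.drop t₀) := by
      rw [List.take_append_drop]; exact hV
    exact ((valid_append G P _ _).1 h1).2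
  have happdrop : app G Q0 (L.drop t₀) = P := by
    rw [hQ0def, ← app_append, List.take_append_drop]; exact hC
  have hQ0 : G.IsPerfectMatching Q0 := matching_app G P (L.take t₀) hP hVtake
  have hV' : Valid G Q0 L' := by
    refine (valid_append G Q0 _ _).2 ⟨hVdrop, ?_⟩
    rw [happdrop]; exact hVtake
  have hC' : app G Q0 L' = Q0 := by
    rw [hL'def, app_append, happdrop]
  have hlen' : L'.length = r := by
    simp [hL'def]
    omega
  have hnsum' : nsum G Q0 L' = nsum G P L := by
    have h1 : nsum G P L = nsum G P (L.take t₀) + nsum G Q0 (L.drop t₀) := by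
      conv_lhs => rw [← List.take_append_drop t₀ L]
      rw [nsum_append]
    rw [hL'def, nsum_append, happdrop]
    omega
  have hosum' : osum G Ω Q0 L' = osum G Ω P L := by
    have h1 : osum G Ω P L = osum G Ω P (L.take t₀) + osum G Ω Q0 (L.drop t₀) := by
      conv_lhs => rw [← List.take_append_drop t₀ L]
      rw [osum_append]
    rw [hL'def, osum_append, happdrop]
    omega
  -- the minimality property of the new base point
  have Hmin : ∀ t, t ≤ r → ht G Q0 ≤ ht G (app G Q0 (L'.take t)) := by
    intro t htle
    by_cases h1 : t ≤ r - t₀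
    · have hdl : (L.drop t₀).length = r - t₀ := by simp [hrdef]
      have htake : L'.take t = (L.drop t₀).take t := by
        rw [hL'def, List.take_append_of_le_length (by omega)]
      have happ : app G Q0 (L'.take t) = app G P (L.take (t₀ + t)) := by
        rw [htake, hQ0def, ← app_append, ← List.take_add]
      rw [happ]
      by_cases h2 : t₀ + t < r
      · exact hmin (t₀ + t) (Finset.mem_range.mpr h2)
      · have : L.take (t₀ + t) = L := List.take_of_length_le (by omega)
        rw [this, hC]
        have := hmin 0 (Finset.mem_range.mpr (by omega))
        simpa using this
    · set s := t - (r - t₀) with hsdef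
      have hs : s ≤ t₀ := by omega
      have hdl : (L.drop t₀).length = r - t₀ := by simp [hrdef]
      have htake : L'.take t = L.drop t₀ ++ L.take s := by
        rw [hL'def]
        have ht' : t = (L.drop t₀).length + s := by omega
        rw [ht', List.take_append, List.take_take, Nat.add_sub_cancel_left, min_eq_left hs,
          List.take_of_length_le (by omega : (L.drop t₀).length ≤ (L.drop t₀).length + s)]
      have happ : app G Q0 (L'.take t) = app G P (L.take s) := by
        rw [htake, app_append, happdrop]
      rw [happ]
      exact hmin s (Finset.mem_range.mpr (by omega))
  -- Step 2: find an interior maximum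
  obtain ⟨ts, htsmem, hmax⟩ := Finset.exists_max_image (Finset.range (r + 1))
    (fun t => ht G (app G Q0 (L'.take t))) ⟨0, by simp⟩
  have htslt : ts < r + 1 := Finset.mem_range.mp htsmem
  have hf0 : ht G (app G Q0 (L'.take 0)) = ht G Q0 := by simp
  have hfr : ht G (app G Q0 (L'.take r)) = ht G Q0 := by
    rw [List.take_of_length_le (by omega), hC']
  have hstep0 := valid_index G Q0 L' hV' 0 (by omega)
  have hf1 : ht G (app G Q0 (L'.take 1)) = ht G Q0 + eps G L'[0] Q0 := by
    rw [hstep0.2]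
    have := ht_twist G Q0 hQ0 L'[0] hstep0.1
    simpa using this
  have heps0 : eps G L'[0] Q0 = 1 := by
    have h1 := Hmin 1 (by omega)
    rcases eps_pm G L'[0] Q0 with h | h
    · exact h
    · rw [hf1, h] at h1; omega
  have hfts : ht G Q0 + 1 ≤ ht G (app G Q0 (L'.take ts)) := by
    have := hmax 1 (Finset.mem_range.mpr (by omega))
    rw [hf1, heps0] at this
    omega
  have hts0 : ts ≠ 0 := by
    intro h; rw [h, hf0] at hfts; omega
  have htsr : ts ≠ r := by
    intro h; rw [h, hfr] at hfts; omega
  set u := ts - 1 with hudef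
  have hu1 : u + 1 = ts := by omega
  have hult : u < r := by omega
  have hu1lt : u + 1 < r := by omega
  set A := L'.take u with hAdef
  have hulen : u < L'.length := by omega
  have hu1len : u + 1 < L'.length := by omega
  obtain ⟨ii, hiidef⟩ : ∃ x, x = L'[u]'hulen := ⟨_, rfl⟩
  obtain ⟨jj, hjjdef⟩ : ∃ x, x = L'[u+1]'hu1len := ⟨_, rfl⟩
  set Q := app G Q0 A with hQdef
  have hidx1 := valid_index G Q0 L' hV' u hulen
  have hidx2 := valid_index G Q0 L' hV' (u + 1) hu1len
  rw [← hiidef] at hidx1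
  rw [← hjjdef] at hidx2
  have happ1 : app G Q0 (L'.take (u + 1)) = G.twist ii Q := hidx1.2
  have happ2 : app G Q0 (L'.take (u + 2)) = G.twist jj (G.twist ii Q) := by
    rw [hidx2.2, happ1]
  have hCT1 : G.CanTwist Q ii := hidx1.1
  have hCT2 : G.CanTwist (G.twist ii Q) jj := by
    have := hidx2.1
    rw [happ1] at this
    exact this
  have hQm : G.IsPerfectMatching Q := matching_app G Q0 A hQ0 (valid_take G Q0 L' hV' u)
  have hQim : G.IsPerfectMatching (G.twist ii Q) := twist_isPerfectMatching G Q hQm ii hCT1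
  -- the two eps values at the peak
  have hepsi : eps G ii Q = 1 := by
    have hmx := hmax u (Finset.mem_range.mpr (by omega))
    have := ht_twist G Q hQm ii hCT1
    rw [← happ1] at this
    have heq : ht G (app G Q0 (L'.take (u+1))) = ht G Q + eps G ii Q := this
    rw [hu1] at heq
    have hmx2 : ht G (app G Q0 (L'.take u)) ≤ ht G (app G Q0 (L'.take ts)) :=
      hmax u (Finset.mem_range.mpr (by omega))
    rcases eps_pm G ii Q with h | h
    · exact h
    · exfalso
      have hQeq : ht G (app G Q0 (L'.take u)) = ht G Q := by rw [hQdef, hAdef]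
      rw [h] at heq
      rw [hQeq, heq] at hmx2
      omega
  have hepsj : eps G jj (G.twist ii Q) = -1 := by
    have hh := ht_twist G (G.twist ii Q) hQim jj hCT2
    have heq : ht G (app G Q0 (L'.take (u+2))) = ht G (G.twist ii Q) + eps G jj (G.twist ii Q) := by
      rw [happ2, hh]
    have hmxts : ht G (app G Q0 (L'.take (u+2))) ≤ ht G (app G Q0 (L'.take ts)) :=
      hmax _ (Finset.mem_range.mpr (by omega))
    have hts' : ht G (app G Q0 (L'.take ts)) = ht G (G.twist ii Q) := by
      rw [← hu1, happ1]
    rcases eps_pm G jj (G.twist ii Q) with h | h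
    · exfalso
      rw [hts'] at hmxts
      rw [heq, h] at hmxts
      omega
    · exact h
  -- decompose L'
  set C := L'.drop (u + 2) with hCdef
  have hdec : L' = A ++ ii :: jj :: C := by
    rw [hAdef, hiidef, hjjdef, hCdef]
    have h1 := list_split_at L' u hulen
    have h2 : L'.drop (u + 1) = L'[u + 1]'hu1len :: L'.drop (u + 2) :=
      List.drop_eq_getElem_cons hu1len
    rw [h2] at h1
    exact h1
  have hVtail : Valid G (G.twist jj (G.twist ii Q)) C := by
    have h1 := ((valid_append G Q0 A (ii :: jj :: C)).1 (hdec ▸ hV')).2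
    exact h1.2.2
  have hCl : app G (G.twist jj (G.twist ii Q)) C = Q0 := by
    have h1 : app G Q0 (A ++ ii :: jj :: C) = Q0 := by rw [← hdec]; exact hC'
    rw [app_append] at h1
    exact h1
  have hosumL' : osum G Ω Q0 L' = osum G Ω Q0 A + (Ω ii Q + Ω jj (G.twist ii Q) +
      osum G Ω (G.twist jj (G.twist ii Q)) C) := by
    rw [hdec, osum_append, ← hQdef]
    simp [osum]
    ring
  have hnsumL' : nsum G Q0 L' = nsum G Q0 A + (gval G Q + gval G (G.twist ii Q) +
      nsum G (G.twist jj (G.twist ii Q)) C) := by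
    rw [hdec, nsum_append, ← hQdef]
    simp [nsum]
    ring
  have hVA : Valid G Q0 A := valid_take G Q0 L' hV' u
  have hAlen : A.length = u := by simp [hAdef]; omega
  have hClen : C.length = r - (u + 2) := by simp [hCdef]; omega
  by_cases hij : ii = jj
  · -- cancellation
    subst hij
    have htt : G.twist ii (G.twist ii Q) = Q := twist_twist G ii Q
    have hVC : Valid G Q C := by rw [← htt]; exact hVtail
    have hClQ : app G Q C = Q0 := by rw [← htt]; exact hCl
    have hVnew : Valid G Q0 (A ++ C) := (valid_append G Q0 A C).2 ⟨hVA, by rw [← hQdef]; exact hVC⟩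
    have hCnew : app G Q0 (A ++ C) = Q0 := by rw [app_append, ← hQdef, hClQ]
    have hnsnew : nsum G Q0 (A ++ C) = nsum G Q0 A + nsum G Q C := by
      rw [nsum_append, ← hQdef]
    have hmeas : (A ++ C).length + nsum G Q0 (A ++ C) < n := by
      have h1 : (A ++ C).length = r - 2 := by
        simp [hAlen, hClen]
        omega
      have h2 : nsum G Q C = nsum G (G.twist ii (G.twist ii Q)) C := by rw [htt]
      rw [h1, hnsnew]
      have := hnsum'
      rw [hnsumL'] at this
      have h3 : nsum G (G.twist ii (G.twist ii Q)) C = nsum G Q C := by rw [htt]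
      omega
    have h0 := IH _ hmeas Q0 (A ++ C) hQ0 hVnew hCnew (le_refl _)
    rw [osum_append, ← hQdef] at h0
    have hΩ := hΩa ii Q hQm hCT1
    have hosC : osum G Ω (G.twist ii (G.twist ii Q)) C = osum G Ω Q C := by rw [htt]
    rw [← hosum', hosumL', hosC]
    omega
  · -- commutation
    have hii1 := hCT1.1
    have hiid := hCT1.2.1
    have hjj1 := hCT2.1
    have hjjd := hCT2.2.1
    have hepsii' : eps G ii (G.twist ii Q) = -1 := by
      rw [eps_twist_self, hepsi]
    have hfar : ii + 2 ≤ jj ∨ jj + 2 ≤ ii := by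
      refine far_of_same_eps G (G.twist ii Q) hQim ii jj
        (canTwist_twist_self G Q hQm ii hCT1) hCT2 hij ?_
      rw [hepsii', hepsj]
    have hCTQj : G.CanTwist Q jj := canTwist_untwist_other G ii jj hii1 hiid hfar Q hCT2
    have hCTtji : G.CanTwist (G.twist jj Q) ii :=
      canTwist_twist_other G jj ii hjj1 hjjd (by tauto) Q hCT1
    have hepsjQ : eps G jj Q = -1 := by
      have := eps_twist_other G ii jj hii1 hiid hjj1 hjjd hfar Q
      rw [← this, hepsj]
    have hcomm : G.twist ii (G.twist jj Q) = G.twist jj (G.twist ii Q) :=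
      twist_comm G ii jj Q
    have hVnew : Valid G Q0 (A ++ jj :: ii :: C) := by
      refine (valid_append G Q0 A _).2 ⟨hVA, ?_⟩
      rw [← hQdef]
      exact ⟨hCTQj, hCTtji, by rw [hcomm]; exact hVtail⟩
    have hCnew : app G Q0 (A ++ jj :: ii :: C) = Q0 := by
      rw [app_append, ← hQdef]
      show app G (G.twist ii (G.twist jj Q)) C = Q0
      rw [hcomm]; exact hCl
    have hgval : gval G (G.twist jj Q) + 2 = gval G (G.twist ii Q) := by
      have h1 := ht_twist G Q hQm ii hCT1
      have h2 := ht_twist G Q hQm jj hCTQj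
      have e1 := gval_eq G (G.twist jj Q)
      have e2 := gval_eq G (G.twist ii Q)
      rw [h1, hepsi] at e2
      rw [h2, hepsjQ] at e1
      omega
    have hnsnew : nsum G Q0 (A ++ jj :: ii :: C) = nsum G Q0 A +
        (gval G Q + gval G (G.twist jj Q) + nsum G (G.twist jj (G.twist ii Q)) C) := by
      rw [nsum_append, ← hQdef]
      simp [nsum]
      rw [hcomm]
      ring
    have hmeas : (A ++ jj :: ii :: C).length + nsum G Q0 (A ++ jj :: ii :: C) < n := by
      have h1 : (A ++ jj :: ii :: C).length = r := by
        simp [hAlen, hClen]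
        omega
      rw [h1, hnsnew]
      have := hnsum'
      rw [hnsumL'] at this
      omega
    have h0 := IH _ hmeas Q0 (A ++ jj :: ii :: C) hQ0 hVnew hCnew (le_refl _)
    rw [osum_append, ← hQdef] at h0
    have hosnew : osum G Ω Q (jj :: ii :: C) = Ω jj Q + Ω ii (G.twist jj Q) +
        osum G Ω (G.twist jj (G.twist ii Q)) C := by
      simp [osum]
      rw [hcomm]
      ring
    have hnatabs : 1 < ((ii : ℤ) - (jj : ℤ)).natAbs := by
      rcases hfar with h | h <;> omega
    have hΩ := hΩb ii jj Q hQm hCT1 hCTQj hnatabs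
    rw [hosnew] at h0
    rw [← hosum', hosumL']
    omega

end SnakeCycle

open SnakeCycle

/-- Let `Ω` assign an integer to every pair of a tile index and a perfect
matching of the snake graph `G` that can twist on that tile, satisfying
`Ω i (μ_i P) = -Ω i P` and the commutation relation
`Ω i P + Ω j (μ_i P) = Ω j P + Ω i (μ_j P)` for `|i - j| > 1`.  Then along any
closed sequence of twists starting and ending at a perfect matching `P`, the
sum of the values of `Ω` vanishes. -/
theorem omega_sum_along_cycle_eq_zero
    (G : SnakeGraph) (Ω : ℕ → Set LatticeEdge → ℤ)
    (hΩa : ∀ i P, G.IsPerfectMatching P → G.CanTwist P i →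
      Ω i (G.twist i P) = -Ω i P)
    (hΩb : ∀ i j P, G.IsPerfectMatching P → G.CanTwist P i → G.CanTwist P j →
      1 < ((i : ℤ) - (j : ℤ)).natAbs →
      Ω i P + Ω j (G.twist i P) = Ω j P + Ω i (G.twist j P))
    (P : Set LatticeEdge) (hP : G.IsPerfectMatching P)
    (r : ℕ) (idx : ℕ → ℕ) (R : ℕ → Set LatticeEdge)
    (h0 : R 0 = P) (hrP : R r = P)
    (hstep : ∀ t, t < r → G.CanTwist (R t) (idx t) ∧ R (t + 1) = G.twist (idx t) (R t)) :
    ∑ t ∈ Finset.range r, Ω (idx t) (R t) = 0 := by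
  have hpre : ∀ t, t ≤ r → app G P ((List.range t).map idx) = R t ∧
      Valid G P ((List.range t).map idx) := by
    intro t
    induction t with
    | zero =>
      intro _
      exact ⟨h0.symm, trivial⟩
    | succ t ih =>
      intro hle
      have ht' : t < r := by omega
      obtain ⟨happt, hvalt⟩ := ih (by omega)
      obtain ⟨hct, hst⟩ := hstep t ht'
      have hmap : (List.range (t + 1)).map idx = (List.range t).map idx ++ [idx t] := by
        rw [List.range_succ, List.map_append]
        rfl
      constructor
      · rw [hmap, app_append, happt]
        exact hst.symm
      · rw [hmap]
        refine (valid_append G P _ _).2 ⟨hvalt, ?_⟩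
        rw [happt]
        exact ⟨hct, trivial⟩
  have hos : ∀ t, t ≤ r → osum G Ω P ((List.range t).map idx) =
      ∑ k ∈ Finset.range t, Ω (idx k) (R k) := by
    intro t
    induction t with
    | zero => intro _; rfl
    | succ t ih =>
      intro hle
      have hmap : (List.range (t + 1)).map idx = (List.range t).map idx ++ [idx t] := by
        rw [List.range_succ, List.map_append]
        rfl
      rw [hmap, osum_append, (hpre t (by omega)).1, ih (by omega), Finset.sum_range_succ]
      show _ + (Ω (idx t) (R t) + 0) = _
      ring
  obtain ⟨happ, hval⟩ := hpre r le_rfl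
  have hclosed : app G P ((List.range r).map idx) = P := by rw [happ, hrP]
  have := key G Ω hΩa hΩb (((List.range r).map idx).length +
    nsum G P ((List.range r).map idx)) P ((List.range r).map idx) hP hval hclosed le_rfl
  rw [hos r le_rfl] at this
  exact this
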